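/- Let r ≥ 2 and set F_D = N_r·(X_r + X_r² + ⋯ + X_r^(n−1)). Then: (1) if n = r+1, then F_D = −N_r; (2) if n = r and r is even, then F_D = −N_r·X_rʳ·(I + X_r) (note X_rʳ = X_r⁻¹), and moreover (I + X_r)·(I + X_r² + X_r⁴ + ⋯ + X_rʳ) = I. -/

import Mathlib

open Matrix



noncomputable def AA (r : ℕ) : Matrix (Fin r) (Fin (r+1)) ℤ :=
  fun i m => if (m:ℕ) = (i:ℕ) then 1 else 0

noncomputable def BB (r : ℕ) : Matrix (Fin (r+1)) (Fin r) ℤ :=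
  fun m j => (if (m:ℕ) = (j:ℕ) then 1 else 0) - (if (m:ℕ) = r then 1 else 0)

lemma hAB (r : ℕ) : AA r * BB r = 1 := by
  ext i j
  rw [Matrix.mul_apply, Finset.sum_eq_single (⟨(i:ℕ), by omega⟩ : Fin (r+1))]
  · simp only [AA, BB, Matrix.one_apply, Fin.ext_iff]
    have : (i:ℕ) < r := i.isLt
    split_ifs <;> omega
  · intro b _ hb
    have : (b:ℕ) ≠ (i:ℕ) := by
      intro h; exact hb (Fin.ext h)
    simp [AA, this]
  · simp

lemma colsum (r : ℕ) (hr : 2 ≤ r) (Xr : Matrix (Fin r) (Fin r) ℤ)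
    (hXr : ∀ i j : Fin r, Xr i j =
      if (i : ℕ) = r - 1 then -1
      else if (i : ℕ) + 1 = (j : ℕ) then 1 else 0)
    (j : Fin r) : ∑ i, Xr i j = if (j:ℕ) = 0 then -1 else 0 := by
  have hsplit : ∀ i : Fin r, Xr i j =
      (if (i:ℕ) = r - 1 then -1 else 0) +
      (if (i:ℕ) ≠ r - 1 ∧ (i:ℕ) + 1 = (j:ℕ) then 1 else 0) := by
    intro i
    rw [hXr]
    split_ifs <;> simp_all
  simp only [hsplit, Finset.sum_add_distrib]
  have h1 : ∑ i : Fin r, (if (i:ℕ) = r - 1 then (-1 : ℤ) else 0) = -1 := by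
    rw [Finset.sum_eq_single (⟨r-1, by omega⟩ : Fin r)]
    · simp
    · intro b _ hb
      have : (b:ℕ) ≠ r - 1 := fun h => hb (Fin.ext (by simpa using h))
      simp [this]
    · simp
  rw [h1]
  by_cases hj : (j:ℕ) = 0
  · have : ∀ i : Fin r, (if (i:ℕ) ≠ r - 1 ∧ (i:ℕ) + 1 = (j:ℕ) then (1:ℤ) else 0) = 0 := by
      intro i; rw [if_neg]; omega
    simp [this, hj]
  · have hjlt : (j:ℕ) < r := j.isLt
    have h2 : ∑ i : Fin r, (if (i:ℕ) ≠ r - 1 ∧ (i:ℕ) + 1 = (j:ℕ) then (1:ℤ) else 0) = 1 := by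
      rw [Finset.sum_eq_single (⟨(j:ℕ)-1, by omega⟩ : Fin r)]
      · rw [if_pos]; simp; omega
      · intro b _ hb
        have : (b:ℕ) ≠ (j:ℕ) - 1 := fun h => hb (Fin.ext (by simpa using h))
        rw [if_neg]; omega
      · simp
    rw [h2]
    simp [hj]

lemma hBX (r : ℕ) (hr : 2 ≤ r) (Xr : Matrix (Fin r) (Fin r) ℤ)
    (hXr : ∀ i j : Fin r, Xr i j =
      if (i : ℕ) = r - 1 then -1
      else if (i : ℕ) + 1 = (j : ℕ) then 1 else 0) :
    BB r * Xr = Matrix.of (fun m j => BB r (m + 1) j) := by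
  ext m j
  have hval : ((m + 1 : Fin (r+1)) : ℕ) = if (m:ℕ) = r then 0 else (m:ℕ) + 1 := by
    rw [Fin.val_add_one]
    by_cases h : m = Fin.last r
    · simp [h]
    · have : (m:ℕ) ≠ r := fun hc => h (Fin.ext (by simpa using hc))
      simp [h, this]
  have expand : ∀ i : Fin r, BB r m i * Xr i j =
      (if (m:ℕ) = (i:ℕ) then Xr i j else 0) - (if (m:ℕ) = r then Xr i j else 0) := by
    intro i
    simp only [BB, sub_mul, ite_mul, one_mul, zero_mul]
  rw [Matrix.mul_apply]
  simp only [expand, Finset.sum_sub_distrib]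
  have hjr : (j:ℕ) < r := j.isLt
  by_cases hm : (m:ℕ) = r
  · have hz : ∀ i : Fin r, (if (m:ℕ) = (i:ℕ) then Xr i j else 0) = 0 := by
      intro i; rw [if_neg]; have := i.isLt; omega
    have hz2 : ∀ i : Fin r, (if (m:ℕ) = r then Xr i j else 0) = Xr i j :=
      fun i => if_pos hm
    simp only [hz, hz2, Finset.sum_const_zero, zero_sub]
    rw [colsum r hr Xr hXr j]
    simp only [Matrix.of_apply, BB, hval, if_pos hm]
    split_ifs <;> omega
  · have hmlt : (m:ℕ) < r := by have := m.isLt; omega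
    have h1 : ∑ i : Fin r, (if (m:ℕ) = (i:ℕ) then Xr i j else 0) = Xr ⟨(m:ℕ), hmlt⟩ j := by
      rw [Finset.sum_eq_single (⟨(m:ℕ), hmlt⟩ : Fin r)]
      · simp
      · intro b _ hb
        have : (m:ℕ) ≠ (b:ℕ) := fun h => hb (Fin.ext (by simpa using h.symm))
        simp [this]
      · simp
    have hz2 : ∀ i : Fin r, (if (m:ℕ) = r then Xr i j else 0) = 0 :=
      fun i => if_neg hm
    simp only [h1, hz2, Finset.sum_const_zero, sub_zero]
    rw [hXr]
    simp only [Matrix.of_apply, BB, hval, if_neg hm]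
    split_ifs <;> omega

lemma rowshift {n p q : Type*} [Fintype p] [DecidableEq p]
    (M : Matrix n p ℤ) (Y : Matrix p q ℤ) (f : n → n) :
    (Matrix.of fun m j => M (f m) j) * Y = Matrix.of (fun m j => (M * Y) (f m) j) := by
  ext m j
  simp [Matrix.mul_apply]

open Fin.NatCast in
lemma hBXk (r : ℕ) (hr : 2 ≤ r) (Xr : Matrix (Fin r) (Fin r) ℤ)
    (hXr : ∀ i j : Fin r, Xr i j =
      if (i : ℕ) = r - 1 then -1
      else if (i : ℕ) + 1 = (j : ℕ) then 1 else 0) (k : ℕ) :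
    BB r * Xr ^ k = Matrix.of (fun m j => BB r (m + (k : Fin (r+1))) j) := by
  induction k with
  | zero => ext m j; simp
  | succ k ih =>
    rw [pow_succ, ← Matrix.mul_assoc, ih, rowshift, hBX r hr Xr hXr]
    ext m j
    have : m + ((k:ℕ) : Fin (r+1)) + 1 = m + (((k:ℕ)+1 : ℕ) : Fin (r+1)) := by
      push_cast
      simp [add_assoc]
    simp [this]

open Fin.NatCast in
lemma Xpow (r : ℕ) (hr : 2 ≤ r) (Xr : Matrix (Fin r) (Fin r) ℤ)
    (hXr : ∀ i j : Fin r, Xr i j =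
      if (i : ℕ) = r - 1 then -1
      else if (i : ℕ) + 1 = (j : ℕ) then 1 else 0) :
    Xr ^ (r + 1) = 1 := by
  have h1 : BB r * Xr ^ (r+1) = BB r := by
    rw [hBXk r hr Xr hXr]
    ext m j
    simp [Fin.natCast_self]
  calc Xr ^ (r+1) = (AA r * BB r) * Xr ^ (r+1) := by rw [hAB, one_mul]
    _ = AA r * (BB r * Xr ^ (r+1)) := by rw [Matrix.mul_assoc]
    _ = AA r * BB r := by rw [h1]
    _ = 1 := hAB r

lemma Tzero (r : ℕ) (hr : 2 ≤ r) (Xr : Matrix (Fin r) (Fin r) ℤ)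
    (hXr : ∀ i j : Fin r, Xr i j =
      if (i : ℕ) = r - 1 then -1
      else if (i : ℕ) + 1 = (j : ℕ) then 1 else 0) :
    ∑ k ∈ Finset.range (r+1), Xr ^ k = 0 := by
  set T := ∑ k ∈ Finset.range (r+1), Xr ^ k with hT
  have hXT : Xr * T = T := by
    have e1 : ∑ k ∈ Finset.range (r+2), Xr ^ k = T + Xr ^ (r+1) :=
      Finset.sum_range_succ _ _
    have e2 : ∑ k ∈ Finset.range (r+2), Xr ^ k
        = (∑ k ∈ Finset.range (r+1), Xr ^ (k+1)) + Xr ^ 0 :=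
      Finset.sum_range_succ' _ _
    have e3 : Xr * T = ∑ k ∈ Finset.range (r+1), Xr ^ (k+1) := by
      rw [hT, Finset.mul_sum]
      exact Finset.sum_congr rfl (fun k _ => (pow_succ' Xr k).symm)
    rw [e1, Xpow r hr Xr hXr, pow_zero] at e2
    rw [e3]
    exact (add_right_cancel e2).symm
  have h0r : 0 < r := by omega
  have hconst : ∀ (j : Fin r) (n : ℕ) (hn : n < r), T ⟨n, hn⟩ j = T ⟨0, h0r⟩ j := by
    intro j n
    induction n with
    | zero => intro _; rfl
    | succ n ih =>
      intro hn
      have hn' : n < r := by omega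
      rw [← ih hn']
      have key := congrFun (congrFun hXT ⟨n, hn'⟩) j
      rw [Matrix.mul_apply] at key
      have hterm : ∀ l : Fin r, Xr ⟨n, hn'⟩ l * T l j
          = if (l:ℕ) = n + 1 then T l j else 0 := by
        intro l
        rw [hXr]
        simp only
        rw [if_neg (by omega : ¬ n = r - 1)]
        by_cases h : (l:ℕ) = n + 1
        · rw [if_pos (by omega), if_pos h, one_mul]
        · rw [if_neg (by omega), if_neg h, zero_mul]
      rw [Finset.sum_congr rfl (fun l _ => hterm l)] at key
      rw [Finset.sum_eq_single (⟨n+1, hn⟩ : Fin r)] at key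
      · rw [if_pos rfl] at key
        exact key
      · intro b _ hb
        rw [if_neg (fun h => hb (Fin.ext h))]
      · simp
  have hc0 : ∀ j : Fin r, T ⟨0, h0r⟩ j = 0 := by
    intro j
    have key := congrFun (congrFun hXT ⟨r-1, by omega⟩) j
    rw [Matrix.mul_apply] at key
    have hterm : ∀ l : Fin r, Xr ⟨r-1, by omega⟩ l * T l j = -(T ⟨0, h0r⟩ j) := by
      intro l
      rw [hXr]
      simp only
      rw [if_pos trivial]
      have : T l j = T ⟨0, h0r⟩ j := by
        have := hconst j (l:ℕ) l.isLt
        simpa using this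
      rw [this]
      ring
    rw [Finset.sum_congr rfl (fun l _ => hterm l), Finset.sum_const,
      Finset.card_univ, Fintype.card_fin] at key
    have hkey2 : T ⟨r-1, by omega⟩ j = T ⟨0, h0r⟩ j := hconst j (r-1) (by omega)
    rw [hkey2] at key
    have : ((r:ℤ) + 1) * T ⟨0, h0r⟩ j = 0 := by
      have := key
      simp only [nsmul_eq_mul] at this
      linarith
    have hr1 : ((r:ℤ) + 1) ≠ 0 := by positivity
    exact (mul_eq_zero.mp this).resolve_left hr1
  ext i j
  have : T i j = T ⟨(i:ℕ), i.isLt⟩ j := by congr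
  rw [this, hconst j (i:ℕ) i.isLt, hc0 j]
  simp

lemma two_mul_sum {M : Type*} [AddCommMonoid M] (f : ℕ → M) (n : ℕ) :
    ∑ k ∈ Finset.range (2*n), f k = ∑ i ∈ Finset.range n, (f (2*i) + f (2*i+1)) := by
  induction n with
  | zero => simp
  | succ n ih =>
    have h : 2*(n+1) = 2*n+1+1 := by ring
    rw [h, Finset.sum_range_succ, Finset.sum_range_succ, ih, Finset.sum_range_succ]
    have h1 : 2*n+1 = 2*n+1 := rfl
    rw [add_assoc]

/-- special cases of `F_D = N_r·(X_r + ⋯ + X_r^(n-1))`: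
(1) for `n = r+1`, `F_D = -N_r`; (2) for `n = r` even, `F_D = -N_r·X_r⁻¹·(I + X_r)`
(with `X_r⁻¹ = X_rʳ`), and `(I + X_r)(I + X_r² + X_r⁴ + ⋯ + X_rʳ) = I`. -/
theorem stmt_8 (r : ℕ) (hr : 2 ≤ r)
    (Nr Xr : Matrix (Fin r) (Fin r) ℤ)
    (hNr : ∀ i j : Fin r, Nr i j = if i ≤ j then -1 else 0)
    (hXr : ∀ i j : Fin r, Xr i j =
      if (i : ℕ) = r - 1 then -1
      else if (i : ℕ) + 1 = (j : ℕ) then 1 else 0) :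
    (Nr * ∑ i ∈ Finset.Icc 1 ((r + 1) - 1), Xr ^ i = -Nr) ∧
    (Even r →
      (Nr * ∑ i ∈ Finset.Icc 1 (r - 1), Xr ^ i = -(Nr * Xr ^ r * (1 + Xr))) ∧
      (1 + Xr) * (∑ i ∈ Finset.range (r / 2 + 1), Xr ^ (2 * i)) = 1) := by
  have hp := Xpow r hr Xr hXr
  have hT := Tzero r hr Xr hXr
  have hIcc : ∑ i ∈ Finset.Icc 1 r, Xr ^ i = -1 := by
    have h1 : ∑ k ∈ Finset.range (r+1), Xr ^ k
        = Xr ^ 0 + ∑ i ∈ Finset.Ico 1 (r+1), Xr ^ i := by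
      rw [Finset.range_eq_Ico, Finset.sum_eq_sum_Ico_succ_bot (by omega)]
    rw [hT] at h1
    have h2 : Finset.Icc 1 r = Finset.Ico 1 (r+1) := (Finset.Ico_add_one_right_eq_Icc 1 r).symm
    rw [h2]
    rw [pow_zero] at h1
    exact (neg_eq_of_add_eq_zero_right h1.symm).symm
  have hr1 : 1 ≤ r - 1 := by omega
  have hsucc : r - 1 + 1 = r := by omega
  have hIcc2 : ∑ i ∈ Finset.Icc 1 (r-1), Xr ^ i = -1 - Xr ^ r := by
    have h3 : ∑ i ∈ Finset.Icc 1 (r-1+1), Xr ^ i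
        = (∑ i ∈ Finset.Icc 1 (r-1), Xr ^ i) + Xr ^ (r-1+1) :=
      Finset.sum_Icc_succ_top (by omega) _
    rw [hsucc, hIcc] at h3
    exact eq_sub_of_add_eq h3.symm
  constructor
  · have : (r + 1) - 1 = r := by omega
    rw [this, hIcc, mul_neg_one]
  · intro hev
    constructor
    · have hexp : Nr * Xr ^ r * (1 + Xr) = Nr * Xr ^ r + Nr := by
        rw [mul_add, mul_one, Matrix.mul_assoc, ← pow_succ, hp, mul_one]
      rw [hIcc2, hexp, mul_sub, mul_neg_one]
      noncomm_ring
    · have hhalf : 2 * (r / 2 + 1) = r + 2 := by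
        have := Nat.even_iff.mp hev
        omega
      have e1 : ∑ k ∈ Finset.range (r+2), Xr ^ k = 1 := by
        rw [Finset.sum_range_succ, hT, hp, zero_add]
      have e2 : ∑ k ∈ Finset.range (r+2), Xr ^ k
          = ∑ i ∈ Finset.range (r/2+1), (Xr ^ (2*i) + Xr ^ (2*i+1)) := by
        rw [← hhalf]
        exact two_mul_sum _ _
      rw [add_mul, one_mul, Finset.mul_sum]
      have e3 : ∀ i : ℕ, Xr * Xr ^ (2*i) = Xr ^ (2*i+1) :=
        fun i => (pow_succ' Xr (2*i)).symm
      rw [Finset.sum_congr rfl (fun i _ => e3 i), ← Finset.sum_add_distrib, ← e2, e1]
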